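/- arXiv:2110.15547 — 5 statements merged into one kernel-verified Lean document; each statement's English description precedes it below -/
import Mathlib

section
/- Let λ > 0, α > 0, η ∈ [0,1], and let P be the 2×2 matrix with rows (1 − αλ + η, −η) and (1, 0). If (1 − √(αλ))² ≤ η ≤ (1 + √(αλ))², then (αλ − 1 − η)² − 4η ≤ 0, the eigenvalues of P are complex conjugates, and the spectral radius of P equals √η. -/
open Matrix

private lemma heavyBall_aux_normSq (b e : ℝ) (μ : ℂ) (hd : b ^ 2 - 4 * e ≤ 0)
    (h : μ ^ 2 - (b : ℂ) * μ + (e : ℂ) = 0) : μ.re ^ 2 + μ.im ^ 2 = e := by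
  have hRe := congrArg Complex.re h
  have hIm := congrArg Complex.im h
  simp [pow_two, Complex.mul_re, Complex.mul_im] at hRe hIm
  set x := μ.re; set y := μ.im
  rcases mul_eq_zero.mp (show y * (2 * x - b) = 0 by linarith [hIm]) with hy | hx
  · have h4 : (2 * x - b) ^ 2 = b ^ 2 - 4 * e := by nlinarith [hRe, hy]
    have hx0 : 2 * x - b = 0 := by nlinarith [sq_nonneg (2 * x - b)]
    nlinarith [hRe, hy, hx0]
  · linear_combination (-1 : ℝ) * hRe + x * hx

private lemma heavyBall_aux_disc (s t : ℝ) (hs : 0 ≤ s) (ht : 0 ≤ t)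
    (h1 : (1 - s) ^ 2 ≤ t ^ 2) (h2 : t ^ 2 ≤ (1 + s) ^ 2) :
    (s ^ 2 - 1 - t ^ 2) ^ 2 - 4 * t ^ 2 ≤ 0 := by
  nlinarith [mul_nonneg hs ht, sq_nonneg (s - t), sq_nonneg (s + t), sq_nonneg (s * t),
    mul_nonneg (mul_nonneg hs ht) hs, mul_nonneg (mul_nonneg hs ht) ht]

/-- If `(1 − √(αλ))² ≤ η ≤ (1 + √(αλ))²` with `η ∈ [0,1]`, then the discriminant
`(αλ − 1 − η)² − 4η` is nonpositive, the eigenvalues of the heavy-ball companion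
matrix `P` come in complex-conjugate pairs, and every eigenvalue has modulus `√η`,
i.e. the spectral radius of `P` equals `√η`. -/
theorem heavyBall_complex_spectralRadius (lam alpha eta : ℝ)
    (hlam : 0 < lam) (halpha : 0 < alpha) (heta0 : 0 ≤ eta) (heta1 : eta ≤ 1)
    (h1 : (1 - Real.sqrt (alpha * lam)) ^ 2 ≤ eta)
    (h2 : eta ≤ (1 + Real.sqrt (alpha * lam)) ^ 2)
    (P : Matrix (Fin 2) (Fin 2) ℂ)
    (hP : P = !![((1 - alpha * lam + eta : ℝ) : ℂ), ((-eta : ℝ) : ℂ); 1, 0]) :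
    (alpha * lam - 1 - eta) ^ 2 - 4 * eta ≤ 0 ∧
    (∀ μ : ℂ, μ ∈ spectrum ℂ P →
      (starRingEnd ℂ) μ ∈ spectrum ℂ P ∧ ‖μ‖ = Real.sqrt eta) := by
  have hs2 : Real.sqrt (alpha * lam) ^ 2 = alpha * lam := Real.sq_sqrt (by positivity)
  have ht2 : Real.sqrt eta ^ 2 = eta := Real.sq_sqrt heta0
  have hdisc : (alpha * lam - 1 - eta) ^ 2 - 4 * eta ≤ 0 := by
    have := heavyBall_aux_disc (Real.sqrt (alpha * lam)) (Real.sqrt eta)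
      (Real.sqrt_nonneg _) (Real.sqrt_nonneg _) (by rw [ht2]; exact h1) (by rw [ht2]; exact h2)
    rw [hs2, ht2] at this
    linarith
  have hdisc' : (1 - alpha * lam + eta) ^ 2 - 4 * eta ≤ 0 := by nlinarith [hdisc]
  have hmem : ∀ μ : ℂ,
      μ ∈ spectrum ℂ P ↔ μ ^ 2 - ((1 - alpha * lam + eta : ℝ) : ℂ) * μ + (eta : ℂ) = 0 := by
    intro μ
    subst hP
    rw [spectrum.mem_iff, Matrix.isUnit_iff_isUnit_det, isUnit_iff_ne_zero, not_not,
      Algebra.algebraMap_eq_smul_one]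
    have heq : μ • (1 : Matrix (Fin 2) (Fin 2) ℂ)
          - !![((1 - alpha * lam + eta : ℝ) : ℂ), ((-eta : ℝ) : ℂ); 1, 0]
        = !![μ - ((1 - alpha * lam + eta : ℝ) : ℂ), (eta : ℂ); -1, μ] := by
      ext i j; fin_cases i <;> fin_cases j <;> simp [Matrix.one_apply]
    rw [heq, Matrix.det_fin_two_of]
    constructor <;> intro h <;> linear_combination h
  refine ⟨hdisc, fun μ hμ => ?_⟩
  have h := (hmem μ).mp hμ
  constructor
  · refine (hmem _).mpr ?_
    have hc := congrArg (starRingEnd ℂ) h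
    simpa [map_sub, map_add, _root_.map_mul, map_pow, Complex.conj_ofReal] using hc
  · have hsq : μ.re ^ 2 + μ.im ^ 2 = eta := heavyBall_aux_normSq _ _ _ hdisc' h
    have habs : ‖μ‖ ^ 2 = eta := by
      rw [Complex.sq_norm, Complex.normSq_apply]; linear_combination hsq
    calc ‖μ‖ = Real.sqrt (‖μ‖ ^ 2) :=
          (Real.sqrt_sq (norm_nonneg μ)).symm
      _ = Real.sqrt eta := by rw [habs]
end

section
/- Let λ > 0, 0 < αλ < 1, and η ∈ [0, (1 − √(αλ))²] so that the eigenvalues μ₊ ≥ μ₋ of the 2×2 matrix P with rows (1 − αλ + η, −η) and (1, 0) are real with |μ±| ≤ 1. Then the function g(η, αλ) = (4(1 − η)/(αλ)) · (1 − μ₊) satisfies g(η, αλ) ≤ 8, where μ₊ = ((1 − αλ + η) + √((1 − αλ + η)² − 4η))/2. -/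
/-- With `0 < αλ < 1` and `η ∈ [0, (1 − √(αλ))²]` (so that the eigenvalues of the
heavy-ball companion matrix are real with modulus at most 1), the function
`g(η, αλ) = (4(1 − η)/(αλ)) (1 − μ₊)` with
`μ₊ = ((1 − αλ + η) + √((1 − αλ + η)² − 4η))/2` satisfies `g(η, αλ) ≤ 8`. -/
theorem g_le_eight (lam alpha eta : ℝ) (hlam : 0 < lam)
    (h0 : 0 < alpha * lam) (h1 : alpha * lam < 1)
    (heta0 : 0 ≤ eta) (heta1 : eta ≤ (1 - Real.sqrt (alpha * lam)) ^ 2) :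
    (4 * (1 - eta) / (alpha * lam)) *
      (1 - ((1 - alpha * lam + eta) +
        Real.sqrt ((1 - alpha * lam + eta) ^ 2 - 4 * eta)) / 2) ≤ 8 := by
  set a := alpha * lam with ha
  have hsa0 : 0 ≤ Real.sqrt a := Real.sqrt_nonneg a
  have hsa2 : Real.sqrt a ^ 2 = a := Real.sq_sqrt h0.le
  have hsa1 : Real.sqrt a < 1 := by
    rw [show (1:ℝ) = Real.sqrt 1 by simp]
    exact Real.sqrt_lt_sqrt h0.le h1
  have hse0 : 0 ≤ Real.sqrt eta := Real.sqrt_nonneg eta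
  have hse2 : Real.sqrt eta ^ 2 = eta := Real.sq_sqrt heta0
  have hkey : Real.sqrt eta ≤ 1 - Real.sqrt a := by
    have := Real.sqrt_le_sqrt heta1
    rwa [Real.sqrt_sq (by linarith)] at this
  set b := 1 - a + eta with hb
  have hD0 : 0 ≤ b ^ 2 - 4 * eta := by nlinarith [sq_nonneg (Real.sqrt eta - Real.sqrt a)]
  set s := Real.sqrt (b ^ 2 - 4 * eta) with hs
  have hs0 : 0 ≤ s := Real.sqrt_nonneg _
  have hs2 : s ^ 2 = b ^ 2 - 4 * eta := Real.sq_sqrt hD0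
  have heta_lt1 : eta < 1 := by nlinarith
  -- s < 2 - b, since (2-b)^2 - s^2 = 4a > 0 and 2 - b = 1 + a - eta > 0
  have h2b : s < 2 - b := by nlinarith
  have hbs : s ≤ b := by
    have : s ^ 2 ≤ b ^ 2 := by nlinarith
    have hb0 : 0 ≤ b := by nlinarith
    nlinarith
  rw [div_mul_eq_mul_div, div_le_iff₀ h0]
  -- goal: 4*(1-eta)*(1-(b+s)/2) ≤ 8 * a, with a = 1 - b + eta
  nlinarith [mul_nonneg (by linarith : (0:ℝ) ≤ 2 - b - s) (by linarith : (0:ℝ) ≤ a + s), hs2, hb]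
end

section
/- Let λ > 0, αλ < 1, and η ∈ ((1 − √(αλ))², 1] so that the eigenvalues of the 2×2 matrix P with rows (1 − αλ + η, −η) and (1, 0) are complex conjugates μ± with |μ±| = √η. Then (1 − μ₊²)(1 − μ₋²) ≤ 4(1 − μ₊)(1 − μ₋) (as real numbers), and consequently (1 − μ₊²)(1 − μ₋²)(1 − η)(1 − √η)/(αλ)² ≤ 8. -/
/-- When the eigenvalues of the heavy-ball companion matrix are complex conjugates
`μ₊, μ₋` with `μ₊ + μ₋ = 1 − αλ + η`, `μ₊ μ₋ = η` and `|μ±| = √η`, the quantity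
`(1 − μ₊²)(1 − μ₋²)` is real and satisfies
`(1 − μ₊²)(1 − μ₋²) ≤ 4(1 − μ₊)(1 − μ₋)`, and consequently
`(1 − μ₊²)(1 − μ₋²)(1 − η)(1 − √η)/(αλ)² ≤ 8`. -/
theorem complex_case_bound (lam alpha eta : ℝ) (mup mum : ℂ)
    (hlam : 0 < lam) (halpha : 0 < alpha) (h1 : alpha * lam < 1)
    (heta1 : (1 - Real.sqrt (alpha * lam)) ^ 2 < eta) (heta2 : eta ≤ 1)
    (hconj : mum = (starRingEnd ℂ) mup)
    (hsum : mup + mum = ((1 - alpha * lam + eta : ℝ) : ℂ))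
    (hprod : mup * mum = ((eta : ℝ) : ℂ))
    (habs : ‖mup‖ = Real.sqrt eta) :
    ((1 - mup ^ 2) * (1 - mum ^ 2)).im = 0 ∧
    ((1 - mup ^ 2) * (1 - mum ^ 2)).re ≤ 4 * ((1 - mup) * (1 - mum)).re ∧
    ((1 - mup ^ 2) * (1 - mum ^ 2)).re * (1 - eta) * (1 - Real.sqrt eta) /
      (alpha * lam) ^ 2 ≤ 8 := by
  set t := alpha * lam with ht
  have ht0 : 0 < t := mul_pos halpha hlam
  -- the two products are real
  have hE : (1 - mup ^ 2) * (1 - mum ^ 2) =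
      ((t * (2 - t + 2 * eta) : ℝ) : ℂ) := by
    have : (1 - mup ^ 2) * (1 - mum ^ 2) =
        1 - ((mup + mum) ^ 2 - 2 * (mup * mum)) + (mup * mum) ^ 2 := by ring
    rw [this, hsum, hprod]
    push_cast
    ring
  have hF : (1 - mup) * (1 - mum) = ((t : ℝ) : ℂ) := by
    have : (1 - mup) * (1 - mum) = 1 - (mup + mum) + mup * mum := by ring
    rw [this, hsum, hprod]
    push_cast
    ring
  rw [hE, hF]
  have him : ((t * (2 - t + 2 * eta) : ℝ) : ℂ).im = 0 := Complex.ofReal_im _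
  have hre : ((t * (2 - t + 2 * eta) : ℝ) : ℂ).re = t * (2 - t + 2 * eta) :=
    Complex.ofReal_re _
  have hfre : ((t : ℝ) : ℂ).re = t := Complex.ofReal_re _
  rw [him, hre, hfre]
  refine ⟨rfl, ?_, ?_⟩
  · nlinarith
  · set s := Real.sqrt t with hs
    have hs0 : 0 < s := Real.sqrt_pos.mpr ht0
    have hs2 : s ^ 2 = t := Real.sq_sqrt ht0.le
    set u := Real.sqrt eta with hu
    have heta0 : 0 ≤ eta := le_trans (sq_nonneg _) heta1.le
    have hu2 : u ^ 2 = eta := Real.sq_sqrt heta0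
    have hu1 : u ≤ 1 := by
      rw [hu]
      calc Real.sqrt eta ≤ Real.sqrt 1 := Real.sqrt_le_sqrt heta2
        _ = 1 := Real.sqrt_one
    have hu0 : 0 ≤ u := Real.sqrt_nonneg _
    have hsle : 1 - s ≤ u := by
      have := Real.sqrt_le_sqrt heta1.le
      rw [Real.sqrt_sq_eq_abs] at this
      calc 1 - s ≤ |1 - s| := le_abs_self _
        _ ≤ Real.sqrt eta := this
        _ = u := rfl
    rw [div_le_iff₀ (by positivity)]
    have h4 : 2 - t + 2 * eta ≤ 4 := by nlinarith
    have hB2 : (1 - u) ^ 2 ≤ s ^ 2 :=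
      pow_le_pow_left₀ (by linarith) (by linarith) 2
    have hA : (1 - eta) * (1 - u) ≤ 2 * t := by nlinarith
    have hB0 : 0 ≤ (1 - eta) * (1 - u) := by nlinarith
    have key : (2 - t + 2 * eta) * ((1 - eta) * (1 - u)) ≤ 4 * (2 * t) :=
      mul_le_mul h4 hA hB0 (by norm_num)
    nlinarith [mul_le_mul_of_nonneg_left key ht0.le]
end

section
/- Let λ > 0, α > 0 with αλ ≤ 1, and η = (1 − √(αλ)/2)². Then the discriminant Δ = (1 + η − αλ)² − 4η of the characteristic polynomial of the matrix P with rows (1 − αλ + η, −η) and (1, 0) satisfies |Δ| = 4η − (1 + η − αλ)² ≥ (15/16) αλ. -/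
/-- With `αλ ≤ 1` and `η = (1 − √(αλ)/2)²`, the discriminant
`Δ = (1 + η − αλ)² − 4η` of the heavy-ball characteristic polynomial satisfies
`|Δ| = 4η − (1 + η − αλ)² ≥ (15/16) αλ`. -/
theorem discriminant_lower_bound (lam alpha eta : ℝ)
    (hlam : 0 < lam) (halpha : 0 < alpha) (hal : alpha * lam ≤ 1)
    (heta : eta = (1 - Real.sqrt (alpha * lam) / 2) ^ 2) :
    |(1 + eta - alpha * lam) ^ 2 - 4 * eta| = 4 * eta - (1 + eta - alpha * lam) ^ 2 ∧
    4 * eta - (1 + eta - alpha * lam) ^ 2 ≥ (15 / 16) * (alpha * lam) := by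
  set s := Real.sqrt (alpha * lam) with hs
  have h0 : (0:ℝ) ≤ alpha * lam := le_of_lt (mul_pos halpha hlam)
  have hs2 : s ^ 2 = alpha * lam := Real.sq_sqrt h0
  have hs0 : 0 ≤ s := Real.sqrt_nonneg _
  have hs1 : s ≤ 1 := by
    rw [hs, show (1:ℝ) = Real.sqrt 1 by simp]
    exact Real.sqrt_le_sqrt hal
  have key : 4 * eta - (1 + eta - alpha * lam) ^ 2 ≥ (15 / 16) * (alpha * lam) := by
    rw [heta, ← hs2]; nlinarith [sq_nonneg s, sq_nonneg (1 - s), mul_nonneg hs0 hs0]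
  refine ⟨?_, key⟩
  rw [abs_sub_comm, abs_of_nonneg]
  nlinarith [key, h0]
end

section
/- Let λ > 0, α > 0 with αλ < 1, and η such that (1 − √(αλ))²/(1 − αλ) ≤ η ≤ (1 + √(αλ))²/(1 − αλ). Then (αλ(1 + η) − 1 − η)² − 4η(1 − αλ) ≤ 0, and each root μ of μ² + μ(αλ(1+η) − 1 − η) + η(1 − αλ) = 0 satisfies |μ| = √(η(1 − αλ)). -/
lemma asg_aux (b c : ℝ) (hdisc : b ^ 2 - 4 * c ≤ 0) (μ : ℂ)
    (hμ : μ ^ 2 + μ * (b : ℂ) + (c : ℂ) = 0) :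
    ‖μ‖ = Real.sqrt c := by
  set x := μ.re with hx
  set y := μ.im with hy
  have him : 2 * x * y + y * b = 0 := by
    have := congrArg Complex.im hμ
    simp [pow_two, Complex.add_im, Complex.mul_im, Complex.ofReal_im, Complex.ofReal_re,
      ← hx, ← hy] at this
    linarith
  have hre : x ^ 2 - y ^ 2 + x * b + c = 0 := by
    have := congrArg Complex.re hμ
    simp [pow_two, Complex.add_re, Complex.mul_re, Complex.ofReal_im, Complex.ofReal_re,
      ← hx, ← hy] at this
    nlinarith [this]
  have habs : ‖μ‖ = Real.sqrt (x ^ 2 + y ^ 2) := by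
    rw [Complex.norm_def, Complex.normSq_apply]; ring_nf; rfl
  have key : x ^ 2 + y ^ 2 = c := by
    have hfac : y * (2 * x + b) = 0 := by linarith
    rcases mul_eq_zero.1 hfac with hy0 | hxb
    · have hx2 : x ^ 2 + x * b + c = 0 := by nlinarith
      have h4 : (2 * x + b) ^ 2 = b ^ 2 - 4 * c := by nlinarith
      have hz : (2 * x + b) ^ 2 = 0 := le_antisymm (by linarith) (sq_nonneg _)
      have h0 : 2 * x + b = 0 := by
        have := sq_eq_zero_iff.1 hz; linarith [this]
      nlinarith
    · have hb2 : b = -(2*x) := by linarith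
      rw [hb2] at hre
      nlinarith [hre]
  rw [habs, key]

/-- ASG spectral radius computation: if
`(1 − √(αλ))²/(1 − αλ) ≤ η ≤ (1 + √(αλ))²/(1 − αλ)` with `αλ < 1`, then the
discriminant `(αλ(1+η) − 1 − η)² − 4η(1 − αλ)` is nonpositive, and each root `μ`
of `μ² + μ(αλ(1+η) − 1 − η) + η(1 − αλ) = 0` satisfies `|μ| = √(η(1 − αλ))`. -/
theorem asg_spectral_radius (lam alpha eta : ℝ)
    (hlam : 0 < lam) (halpha : 0 < alpha) (hal : alpha * lam < 1)
    (h1 : (1 - Real.sqrt (alpha * lam)) ^ 2 / (1 - alpha * lam) ≤ eta)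
    (h2 : eta ≤ (1 + Real.sqrt (alpha * lam)) ^ 2 / (1 - alpha * lam)) :
    (alpha * lam * (1 + eta) - 1 - eta) ^ 2 - 4 * eta * (1 - alpha * lam) ≤ 0 ∧
    (∀ μ : ℂ, μ ^ 2 + μ * ((alpha * lam * (1 + eta) - 1 - eta : ℝ) : ℂ) +
        ((eta * (1 - alpha * lam) : ℝ) : ℂ) = 0 →
      ‖μ‖ = Real.sqrt (eta * (1 - alpha * lam))) := by
  have hQ : (0:ℝ) < 1 - alpha * lam := by linarith
  have hs2 : Real.sqrt (alpha * lam) ^ 2 = alpha * lam := Real.sq_sqrt (by positivity)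
  set s := Real.sqrt (alpha * lam) with hs
  have hP1 : (1 - s) ^ 2 ≤ eta * (1 - alpha * lam) := by
    rw [div_le_iff₀ hQ] at h1; linarith
  have hP2 : eta * (1 - alpha * lam) ≤ (1 + s) ^ 2 := by
    rw [le_div_iff₀ hQ] at h2; linarith
  have hdisc : (alpha * lam * (1 + eta) - 1 - eta) ^ 2 - 4 * eta * (1 - alpha * lam) ≤ 0 := by
    nlinarith [mul_nonneg (sub_nonneg.2 hP1) (sub_nonneg.2 hP2), sq_nonneg s, sq_nonneg (1-s)]
  exact ⟨hdisc, fun μ hμ => asg_aux _ _ (by linarith) μ hμ⟩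
end
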